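/- Let a < b be real numbers and C > 0. Let (φ_n) be a sequence of continuously differentiable functions ℝ → ℝ such that ∫_a^b (φ_n'(x))² dx ≤ C² for every n. Let u_c : [a,b] → ℝ be continuous, and suppose that φ_n(x) → u_c(x) as n → ∞ for Lebesgue-almost every x ∈ (a,b). Then φ_n(x) → u_c(x) as n → ∞ for every x ∈ [a,b]. -/

import Mathlib

open MeasureTheory Set Filter

lemma key_bound (f : ℝ → ℝ) (hf : ContDiff ℝ 1 f) (a b : ℝ) (C t : ℝ) (ht : 0 < t)
    (hb : ∫ x in Set.Icc a b, (deriv f x) ^ 2 ≤ C ^ 2)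
    {y z : ℝ} (hy : y ∈ Set.Icc a b) (hz : z ∈ Set.Icc a b) (hyz : y ≤ z) :
    |f z - f y| ≤ t / 2 * (z - y) + C ^ 2 / (2 * t) := by
  have hg : Continuous (deriv f) := hf.continuous_deriv le_rfl
  have hftc : ∫ s in y..z, deriv f s = f z - f y :=
    intervalIntegral.integral_deriv_eq_sub
      (fun s _ => (hf.differentiable one_ne_zero s).hasDerivAt.differentiableAt)
      (hg.intervalIntegrable y z)
  have h1 : |f z - f y| ≤ ∫ s in Set.Ioc y z, |deriv f s| := by
    rw [← hftc]
    calc |∫ s in y..z, deriv f s| ≤ ∫ s in y..z, |deriv f s| := by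
          simpa using intervalIntegral.norm_integral_le_integral_norm (f := deriv f) hyz
      _ = ∫ s in Set.Ioc y z, |deriv f s| := intervalIntegral.integral_of_le hyz
  have hIsub : Set.Ioc y z ⊆ Set.Icc a b := fun s hs =>
    ⟨hy.1.trans hs.1.le, hs.2.trans hz.2⟩
  have hint2 : IntegrableOn (fun s => (deriv f s) ^ 2) (Set.Icc a b) :=
    (hg.pow 2).integrableOn_Icc
  have h2 : ∫ s in Set.Ioc y z, |deriv f s|
      ≤ ∫ s in Set.Ioc y z, (t / 2 + (deriv f s) ^ 2 / (2 * t)) := by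
    apply setIntegral_mono_on
    · exact hg.abs.integrableOn_Ioc
    · exact ((continuous_const.add ((hg.pow 2).div_const _)).integrableOn_Ioc)
    · exact measurableSet_Ioc
    · intro s _
      have h := sq_nonneg (|deriv f s| - t)
      have : (deriv f s) ^ 2 = |deriv f s| ^ 2 := (sq_abs _).symm
      rw [this]
      have h2t : (0:ℝ) < 2 * t := by linarith
      have heq : t / 2 + |deriv f s| ^ 2 / (2 * t) - |deriv f s|
          = (|deriv f s| - t) ^ 2 / (2 * t) := by field_simp; linear_combination
      linarith [div_nonneg h h2t.le]
  have h3 : ∫ s in Set.Ioc y z, (t / 2 + (deriv f s) ^ 2 / (2 * t))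
      = t / 2 * (z - y) + (∫ s in Set.Ioc y z, (deriv f s) ^ 2) / (2 * t) := by
    rw [integral_add (g := fun s => deriv f s ^ 2 / (2 * t)) (integrableOn_const (C := t / 2) measure_Ioc_lt_top.ne)
        (by exact ((hg.pow 2).div_const (2 * t)).integrableOn_Ioc), setIntegral_const,
      integral_div, Real.volume_real_Ioc, smul_eq_mul]
    rw [max_eq_left (by linarith)]
    ring
  have h4 : ∫ s in Set.Ioc y z, (deriv f s) ^ 2 ≤ C ^ 2 := by
    refine le_trans (setIntegral_mono_set hint2 ?_ (HasSubset.Subset.eventuallyLE hIsub)) hb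
    exact Eventually.of_forall fun s => sq_nonneg _
  calc |f z - f y| ≤ t / 2 * (z - y) + (∫ s in Set.Ioc y z, (deriv f s) ^ 2) / (2 * t) :=
        h1.trans (h2.trans_eq h3)
    _ ≤ t / 2 * (z - y) + C ^ 2 / (2 * t) := by gcongr

lemma key_bound' (f : ℝ → ℝ) (hf : ContDiff ℝ 1 f) (a b : ℝ) (C t : ℝ) (ht : 0 < t)
    (hb : ∫ x in Set.Icc a b, (deriv f x) ^ 2 ≤ C ^ 2)
    {y z : ℝ} (hy : y ∈ Set.Icc a b) (hz : z ∈ Set.Icc a b) :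
    |f z - f y| ≤ t / 2 * |z - y| + C ^ 2 / (2 * t) := by
  rcases le_total y z with h | h
  · calc |f z - f y| ≤ t / 2 * (z - y) + C ^ 2 / (2 * t) :=
          key_bound f hf a b C t ht hb hy hz h
      _ = t / 2 * |z - y| + C ^ 2 / (2 * t) := by
          rw [abs_of_nonneg (by linarith : (0:ℝ) ≤ z - y)]
  · have hk := key_bound f hf a b C t ht hb hz hy h
    calc |f z - f y| = |f y - f z| := abs_sub_comm _ _
      _ ≤ t / 2 * (y - z) + C ^ 2 / (2 * t) := hk
      _ = t / 2 * |z - y| + C ^ 2 / (2 * t) := by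
          rw [abs_sub_comm, abs_of_nonneg (by linarith : (0:ℝ) ≤ y - z)]

/-- Let `a < b` and `C > 0`. Let `φ n` be `C¹` functions with
`∫_a^b (φ_n')² ≤ C²` for each `n`, and let `u_c` be continuous on `[a,b]`. If
`φ_n → u_c` pointwise Lebesgue-a.e. on `(a,b)`, then `φ_n → u_c` pointwise
everywhere on `[a,b]`. -/
theorem ae_pointwise_convergence_to_everywhere
    (a b : ℝ) (hab : a < b) (C : ℝ) (hC : 0 < C)
    (φ : ℕ → ℝ → ℝ) (hφ : ∀ n, ContDiff ℝ 1 (φ n))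
    (hbound : ∀ n, ∫ x in Set.Icc a b, (deriv (φ n) x) ^ 2 ≤ C ^ 2)
    (u : ℝ → ℝ) (hu : ContinuousOn u (Set.Icc a b))
    (hae : ∀ᵐ x ∂(volume.restrict (Set.Ioo a b)),
      Tendsto (fun n => φ n x) atTop (nhds (u x))) :
    ∀ x ∈ Set.Icc a b, Tendsto (fun n => φ n x) atTop (nhds (u x)) := by
  intro x hx
  rw [Metric.tendsto_atTop]
  intro ε hε
  -- choose t and δ₂
  set t : ℝ := 3 * C ^ 2 / ε with ht_def
  have ht : 0 < t := by positivity
  set δ₂ : ℝ := ε / (3 * t) with hδ₂_def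
  have hδ₂ : 0 < δ₂ := by positivity
  -- continuity of u at x within Icc
  have hcx : ContinuousWithinAt u (Set.Icc a b) x := hu x hx
  rw [Metric.continuousWithinAt_iff] at hcx
  obtain ⟨δ₁, hδ₁, hδ₁'⟩ := hcx (ε / 3) (by linarith)
  set δ : ℝ := min δ₁ δ₂ with hδ_def
  have hδ : 0 < δ := lt_min hδ₁ hδ₂
  -- find y near x in Ioo a b with convergence
  set c : ℝ := max a (x - δ / 2) with hc_def
  set d : ℝ := min b (x + δ / 2) with hd_def
  have hcd : c < d := by
    apply max_lt <;> apply lt_min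
    · exact hab
    · linarith [hx.1]
    · linarith [hx.2]
    · linarith
  have hsub : Set.Ioo c d ⊆ Set.Ioo a b := fun s hs =>
    ⟨(le_max_left _ _).trans_lt hs.1, hs.2.trans_le (min_le_left _ _)⟩
  have hy : ∃ y ∈ Set.Ioo c d, Tendsto (fun n => φ n y) atTop (nhds (u y)) := by
    by_contra hcon
    push_neg at hcon
    have hle : Set.Ioo c d ⊆ {s | ¬ Tendsto (fun n => φ n s) atTop (nhds (u s))} :=
      fun s hs => hcon s hs
    have h0 : volume.restrict (Set.Ioo a b) (Set.Ioo c d) = 0 :=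
      measure_mono_null hle hae
    rw [Measure.restrict_apply measurableSet_Ioo,
      Set.inter_eq_self_of_subset_left hsub, Real.volume_Ioo] at h0
    simp only [ENNReal.ofReal_eq_zero] at h0
    linarith
  obtain ⟨y, hyI, hty⟩ := hy
  have hyd : |y - x| < δ := by
    have h1 : x - δ / 2 ≤ c := le_max_right _ _
    have h2 : d ≤ x + δ / 2 := min_le_right _ _
    rw [abs_sub_lt_iff]
    constructor <;> [linarith [hyI.1, hyI.2]; linarith [hyI.1, hyI.2]]
  have hyab : y ∈ Set.Icc a b := Set.Ioo_subset_Icc_self (hsub hyI)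
  -- limit at y
  rw [Metric.tendsto_atTop] at hty
  obtain ⟨N, hN⟩ := hty (ε / 3) (by linarith)
  refine ⟨N, fun n hn => ?_⟩
  have hstep : |φ n x - φ n y| < ε / 3 := by
    have := key_bound' (φ n) (hφ n) a b C t ht (hbound n) hyab hx
    have h1 : t / 2 * |x - y| + C ^ 2 / (2 * t) < ε / 3 := by
      have hxy : |x - y| < δ₂ := by
        rw [abs_sub_comm]; exact hyd.trans_le (min_le_right _ _)
      have e1 : t / 2 * |x - y| < t / 2 * δ₂ := by
        apply mul_lt_mul_of_pos_left hxy (by positivity)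
      have e2 : t / 2 * δ₂ = ε / 6 := by
        field_simp [hδ₂_def, ht_def]
        rw [hδ₂_def]
        field_simp
        norm_num
      have e3 : C ^ 2 / (2 * t) = ε / 6 := by
        rw [ht_def]
        field_simp
        ring
      linarith
    linarith
  have huy : |u y - u x| < ε / 3 := by
    have := hδ₁' hyab (by rw [Real.dist_eq]; exact hyd.trans_le (min_le_left _ _))
    rwa [Real.dist_eq] at this
  have hφy : |φ n y - u y| < ε / 3 := by
    have := hN n hn
    rwa [Real.dist_eq] at this
  have h1 := abs_sub_le (φ n x) (φ n y) (u x)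
  have h2 := abs_sub_le (φ n y) (u y) (u x)
  rw [Real.dist_eq]
  linarith
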